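/- Let d ≥ 1 and let F : ℝ^d → ℂ be a bounded, twice continuously differentiable function whose first and second partial derivatives are all bounded. Let ΔF = Σ_{j=1}^d ∂²F/∂x_j² and L = sup_{x ∈ ℝ^d} |ΔF(x)|. Then for every a ∈ ℝ^d and every t > 0, | ∫_{ℝ^d} F(a + y) dγ_t^d(y) − F(a) | ≤ t · L. -/

import Mathlib

open MeasureTheory ProbabilityTheory

/-- The Gaussian product measure on `ℝ^d` with mean `0` and variance `t` in each coordinate. -/
noncomputable def gaussRn (d : ℕ) (t : ℝ) : Measure (Fin d → ℝ) :=
  Measure.pi fun _ => gaussianReal 0 t.toNNReal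

set_option maxHeartbeats 1000000

open Real Filter Topology Set NNReal ENNReal

lemma gauss_ibp_core {t : ℝ} (ht : 0 < t) (g g' : ℝ → ℂ)
    (hg : ∀ x, HasDerivAt g (g' x) x) (hg'c : Continuous g')
    {A B : ℝ} (hA : ∀ x, ‖g x‖ ≤ A) (hB : ∀ x, ‖g' x‖ ≤ B) :
    ∫ x : ℝ, Real.exp (-x^2/(2*t)) • (x • g x) = ∫ x : ℝ, Real.exp (-x^2/(2*t)) • (t • g' x) := by
  have hgc : Continuous g := by
    apply continuous_iff_continuousAt.2 (fun x => (hg x).differentiableAt.continuousAt)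
  have hA0 : 0 ≤ A := le_trans (norm_nonneg _) (hA 0)
  have hB0 : 0 ≤ B := le_trans (norm_nonneg _) (hB 0)
  set w : ℝ → ℝ := fun x => Real.exp (-x^2/(2*t)) with hw_def
  have hwpos : ∀ x, 0 < w x := fun x => Real.exp_pos _
  have hwc : Continuous w := by fun_prop
  have hw : ∀ x, HasDerivAt w (-(x/t) * w x) x := by
    intro x
    have h1 : HasDerivAt (fun x : ℝ => -x^2/(2*t)) (-(x/t)) x := by
      have := ((hasDerivAt_pow 2 x).neg).div_const (2*t)
      refine this.congr_deriv ?_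
      field_simp
      ring
    have := h1.exp
    convert this using 1
    simp [hw_def]
    ring
  -- the integrable weights
  have hIw : Integrable w := by
    have h := integrable_exp_neg_mul_sq (b := (2*t)⁻¹) (by positivity)
    convert h using 2 with x
    simp only [hw_def]
    ring_nf
  have hIxw : Integrable (fun x => |x| * w x) := by
    have h := (integrable_rpow_mul_exp_neg_mul_sq (b := (2*t)⁻¹) (by positivity)
      (s := 1) (by norm_num)).abs
    convert h using 2 with x
    rw [Real.rpow_one, abs_mul, abs_of_pos (Real.exp_pos _)]
    simp only [hw_def]
    ring_nf
  -- u and its derivative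
  set u : ℝ → ℂ := fun x => (t * w x) • g x with hu_def
  set u' : ℝ → ℂ := fun x => (t * w x) • g' x - (x * w x) • g x with hu'_def
  have hu : ∀ x, HasDerivAt u (u' x) x := by
    intro x
    have hc : HasDerivAt (fun x => t * w x) (t * (-(x/t) * w x)) x := (hw x).const_mul t
    have := hc.smul (hg x)
    refine this.congr_deriv ?_
    have h1 : t * (-(x/t) * w x) = -(x * w x) := by field_simp
    show _ = (t * w x) • g' x - (x * w x) • g x
    rw [h1, sub_eq_add_neg, ← neg_smul]
  -- integrability of the pieces
  have meas1 : AEStronglyMeasurable (fun x => (t * w x) • g' x) volume := by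
    apply Continuous.aestronglyMeasurable; fun_prop
  have meas2 : AEStronglyMeasurable (fun x => (x * w x) • g x) volume := by
    apply Continuous.aestronglyMeasurable; fun_prop
  have hI1 : Integrable (fun x => (t * w x) • g' x) := by
    refine Integrable.mono' ((hIw.const_mul (t*B))) meas1 (ae_of_all _ fun x => ?_)
    rw [norm_smul, Real.norm_eq_abs, abs_mul, abs_of_pos ht, abs_of_pos (hwpos x)]
    calc t * w x * ‖g' x‖ ≤ t * w x * B := by
          exact mul_le_mul_of_nonneg_left (hB x) (by positivity)
      _ = t * B * w x := by ring
  have hI2 : Integrable (fun x => (x * w x) • g x) := by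
    refine Integrable.mono' ((hIxw.const_mul A)) meas2 (ae_of_all _ fun x => ?_)
    rw [norm_smul, Real.norm_eq_abs, abs_mul, abs_of_pos (hwpos x)]
    calc |x| * w x * ‖g x‖ ≤ |x| * w x * A := by
          exact mul_le_mul_of_nonneg_left (hA x) (by positivity)
      _ = A * (|x| * w x) := by ring
  have hIu' : Integrable u' := hI1.sub hI2
  -- limits of u at ±∞
  have hwt : Tendsto w atTop (nhds 0) := by
    have h1 : Tendsto (fun x : ℝ => x^2) atTop atTop := tendsto_pow_atTop two_ne_zero
    have h2 : Tendsto (fun x : ℝ => -x^2/(2*t)) atTop atBot := by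
      have := h1.atTop_mul_const_of_neg (show -(2*t)⁻¹ < 0 by rw [neg_lt_zero]; positivity)
      convert this using 2 with x
      field_simp
    exact Real.tendsto_exp_atBot.comp h2
  have hwb : Tendsto w atBot (nhds 0) := by
    have h1 : Tendsto (fun x : ℝ => x^2) atBot atTop := by
      have := (tendsto_pow_atTop (n := 2) two_ne_zero).comp (tendsto_abs_atBot_atTop : Tendsto (abs : ℝ → ℝ) atBot atTop)
      simpa [Function.comp_def, sq_abs] using this
    have h2 : Tendsto (fun x : ℝ => -x^2/(2*t)) atBot atBot := by
      have := h1.atTop_mul_const_of_neg (show -(2*t)⁻¹ < 0 by rw [neg_lt_zero]; positivity)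
      convert this using 2 with x
      field_simp
    exact Real.tendsto_exp_atBot.comp h2
  have hub : ∀ x, ‖u x‖ ≤ t * A * w x := by
    intro x
    rw [hu_def, norm_smul, Real.norm_eq_abs, abs_mul, abs_of_pos ht, abs_of_pos (hwpos x)]
    calc t * w x * ‖g x‖ ≤ t * w x * A := mul_le_mul_of_nonneg_left (hA x) (by positivity)
      _ = t * A * w x := by ring
  have hut : Tendsto u atTop (nhds 0) := by
    apply squeeze_zero_norm hub
    have h := hwt.const_mul (t*A)
    rw [mul_zero] at h
    exact h
  have hub' : Tendsto u atBot (nhds 0) := by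
    apply squeeze_zero_norm hub
    have h := hwb.const_mul (t*A)
    rw [mul_zero] at h
    exact h
  -- FTC on both halves
  have huc : Continuous u := by fun_prop
  have h1 : ∫ x in Iic (0:ℝ), u' x = u 0 - 0 :=
    integral_Iic_of_hasDerivAt_of_tendsto huc.continuousWithinAt
      (fun x _ => hu x) hIu'.integrableOn hub'
  have h2 : ∫ x in Ioi (0:ℝ), u' x = 0 - u 0 :=
    integral_Ioi_of_hasDerivAt_of_tendsto huc.continuousWithinAt
      (fun x _ => hu x) hIu'.integrableOn hut
  have hzero : ∫ x, u' x = 0 := by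
    rw [← intervalIntegral.integral_Iic_add_Ioi (b := (0:ℝ)) hIu'.integrableOn hIu'.integrableOn, h1, h2]
    ring
  have hsub : (∫ x, (t * w x) • g' x) - (∫ x, (x * w x) • g x) = 0 := by
    rw [← integral_sub hI1 hI2]
    exact hzero
  rw [sub_eq_zero] at hsub
  have e1 : ∀ x : ℝ, w x • (x • g x) = (x * w x) • g x := fun x => by
    rw [smul_smul, mul_comm]
  have e2 : ∀ x : ℝ, w x • (t • g' x) = (t * w x) • g' x := fun x => by
    rw [smul_smul, mul_comm]
  show ∫ x, w x • (x • g x) = ∫ x, w x • (t • g' x)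
  simp_rw [e1, e2]
  exact hsub.symm

lemma gaussianPDFReal_coe_eq {t : ℝ} (ht : 0 < t) (x : ℝ) :
    ((Real.toNNReal (gaussianPDFReal 0 t.toNNReal x) : ℝ≥0) : ℝ)
      = (Real.sqrt (2*π*t))⁻¹ * Real.exp (-x^2/(2*t)) := by
  have hvt : ((t.toNNReal : ℝ≥0) : ℝ) = t := Real.coe_toNNReal t ht.le
  rw [Real.coe_toNNReal _ (gaussianPDFReal_nonneg _ _ _), gaussianPDFReal, hvt]
  simp only [sub_zero]

lemma stein1d {t : ℝ} (ht : 0 < t) (g g' : ℝ → ℂ)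
    (hg : ∀ x, HasDerivAt g (g' x) x) (hg'c : Continuous g')
    {A B : ℝ} (hA : ∀ x, ‖g x‖ ≤ A) (hB : ∀ x, ‖g' x‖ ≤ B) :
    ∫ x, x • g x ∂(gaussianReal 0 t.toNNReal)
      = ∫ x, t • g' x ∂(gaussianReal 0 t.toNNReal) := by
  have hv : (t.toNNReal : ℝ≥0) ≠ 0 := by
    simp only [ne_eq, Real.toNNReal_eq_zero, not_le]; exact ht
  have hmeas : Measurable (fun x => Real.toNNReal (gaussianPDFReal 0 t.toNNReal x)) :=
    (measurable_gaussianPDFReal 0 _).real_toNNReal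
  rw [gaussianReal_of_var_ne_zero 0 hv]
  have hd : (gaussianPDF 0 t.toNNReal)
      = fun x => ((Real.toNNReal (gaussianPDFReal 0 t.toNNReal x) : ℝ≥0) : ℝ≥0∞) := rfl
  rw [hd, integral_withDensity_eq_integral_smul hmeas,
    integral_withDensity_eq_integral_smul hmeas]
  simp only [NNReal.smul_def, gaussianPDFReal_coe_eq ht, mul_smul]
  rw [integral_smul, integral_smul, gauss_ibp_core ht g g' hg hg'c hA hB]

lemma integrable_abs_gaussianReal {t : ℝ} (ht : 0 < t) :
    Integrable (fun x => |x|) (gaussianReal 0 t.toNNReal) := by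
  have hv : (t.toNNReal : ℝ≥0) ≠ 0 := by
    simp only [ne_eq, Real.toNNReal_eq_zero, not_le]; exact ht
  have hmeas : Measurable (fun x => Real.toNNReal (gaussianPDFReal 0 t.toNNReal x)) :=
    (measurable_gaussianPDFReal 0 _).real_toNNReal
  rw [gaussianReal_of_var_ne_zero 0 hv]
  have hd : (gaussianPDF 0 t.toNNReal)
      = fun x => ((Real.toNNReal (gaussianPDFReal 0 t.toNNReal x) : ℝ≥0) : ℝ≥0∞) := rfl
  rw [hd, integrable_withDensity_iff_integrable_smul hmeas]
  have hIxw : Integrable (fun x : ℝ => |x| * Real.exp (-x^2/(2*t))) := by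
    have h := (integrable_rpow_mul_exp_neg_mul_sq (b := (2*t)⁻¹) (by positivity)
      (s := 1) (by norm_num)).abs
    convert h using 2 with x
    rw [Real.rpow_one, abs_mul, abs_of_pos (Real.exp_pos _)]
    ring_nf
  have := hIxw.const_mul (Real.sqrt (2*π*t))⁻¹
  refine this.congr ?_
  filter_upwards with x
  simp only [NNReal.smul_def, gaussianPDFReal_coe_eq ht, smul_eq_mul]
  ring

lemma insertNth_eq_add {n : ℕ} (j : Fin (n+1)) (x : ℝ) (w : Fin n → ℝ) :
    (j.insertNth x w : Fin (n+1) → ℝ)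
      = (j.insertNth 0 w : Fin (n+1) → ℝ) + x • (Pi.single j 1 : Fin (n+1) → ℝ) := by
  funext i
  refine Fin.succAboveCases j ?_ ?_ i
  · simp
  · intro k
    simp [Fin.insertNth_apply_succAbove, Pi.single_eq_of_ne (Fin.succAbove_ne j k)]

lemma steinPi {n : ℕ} {t : ℝ} (ht : 0 < t) (j : Fin (n+1)) (g : (Fin (n+1) → ℝ) → ℂ)
    (hg : ContDiff ℝ 1 g) {A B : ℝ} (hA : ∀ y, ‖g y‖ ≤ A)
    (hB : ∀ y, ‖fderiv ℝ g y‖ ≤ B) :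
    ∫ y, (y j) • g y ∂(gaussRn (n+1) t)
      = ∫ y, t • fderiv ℝ g y (Pi.single j 1) ∂(gaussRn (n+1) t) := by
  set ν := gaussianReal 0 t.toNNReal with hν
  set π' : Measure (Fin n → ℝ) := Measure.pi (fun _ => ν) with hπ'
  set e := MeasurableEquiv.piFinSuccAbove (fun _ : Fin (n+1) => ℝ) j with he_def
  have hMP : MeasurePreserving e (gaussRn (n+1) t) (ν.prod π') :=
    measurePreserving_piFinSuccAbove (fun _ : Fin (n+1) => ν) j
  have hMPs : MeasurePreserving e.symm (ν.prod π') (gaussRn (n+1) t) := hMP.symm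
  have hes : ∀ z : ℝ × (Fin n → ℝ), (e.symm z : Fin (n+1) → ℝ) = j.insertNth z.1 z.2 :=
    fun z => rfl
  have hgc : Continuous g := hg.continuous
  have hgd : Differentiable ℝ g := hg.differentiable one_ne_zero
  have hg' : Continuous (fderiv ℝ g) := hg.continuous_fderiv one_ne_zero
  have hcont_ins : Continuous (fun z : ℝ × (Fin n → ℝ) => (j.insertNth z.1 z.2 : Fin (n+1) → ℝ)) := by
    apply continuous_pi
    intro i
    refine Fin.succAboveCases j ?_ ?_ i
    · simp only [Fin.insertNth_apply_same]
      exact continuous_fst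
    · intro k
      simp only [Fin.insertNth_apply_succAbove]
      exact (continuous_apply k).comp continuous_snd
  have hB0 : 0 ≤ B := le_trans (norm_nonneg _) (hB 0)
  have habs : Integrable (fun z : ℝ × (Fin n → ℝ) => |z.1|) (ν.prod π') := by
    have h1 : Integrable (fun x : ℝ => |x|) ((ν.prod π').map Prod.fst) := by
      rw [Measure.map_fst_prod]
      simpa using integrable_abs_gaussianReal ht
    exact (integrable_map_measure h1.aestronglyMeasurable
      measurable_fst.aemeasurable).1 h1
  set f₁ : ℝ × (Fin n → ℝ) → ℂ := fun z => z.1 • g (j.insertNth z.1 z.2 : Fin (n+1) → ℝ) with hf₁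
  set f₂ : ℝ × (Fin n → ℝ) → ℂ :=
    fun z => t • fderiv ℝ g (j.insertNth z.1 z.2 : Fin (n+1) → ℝ) (Pi.single j 1) with hf₂
  have hf₁c : Continuous f₁ := continuous_fst.smul (hgc.comp hcont_ins)
  have hf₂c : Continuous f₂ :=
    ((hg'.comp hcont_ins).clm_apply continuous_const).const_smul t
  have hf₁int : Integrable f₁ (ν.prod π') := by
    refine (habs.const_mul A).mono' hf₁c.aestronglyMeasurable (ae_of_all _ fun z => ?_)
    rw [hf₁]
    simp only []
    rw [norm_smul, Real.norm_eq_abs]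
    calc |z.1| * ‖g (j.insertNth z.1 z.2)‖ ≤ |z.1| * A :=
          mul_le_mul_of_nonneg_left (hA _) (abs_nonneg _)
      _ = A * |z.1| := mul_comm _ _
  have hf₂int : Integrable f₂ (ν.prod π') := by
    refine (integrable_const
      (t * (B * ‖(Pi.single j 1 : Fin (n+1) → ℝ)‖))).mono'
      hf₂c.aestronglyMeasurable (ae_of_all _ fun z => ?_)
    rw [hf₂]
    simp only []
    rw [norm_smul, Real.norm_eq_abs, abs_of_pos ht]
    refine mul_le_mul_of_nonneg_left ?_ ht.le
    exact le_trans (ContinuousLinearMap.le_opNorm _ _)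
      (mul_le_mul_of_nonneg_right (hB _) (norm_nonneg _))
  have key : ∀ w : Fin n → ℝ, (∫ x, x • g (j.insertNth x w : Fin (n+1) → ℝ) ∂ν)
      = ∫ x, t • fderiv ℝ g (j.insertNth x w : Fin (n+1) → ℝ) (Pi.single j 1) ∂ν := by
    intro w
    have hcurve : ∀ x : ℝ,
        HasDerivAt (fun x : ℝ => (j.insertNth x w : Fin (n+1) → ℝ)) (Pi.single j 1 : Fin (n+1) → ℝ) x := by
      intro x
      have hrw : (fun x : ℝ => (j.insertNth x w : Fin (n+1) → ℝ))
          = fun x : ℝ => (j.insertNth 0 w : Fin (n+1) → ℝ) + x • (Pi.single j 1 : Fin (n+1) → ℝ) := by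
        funext x; exact insertNth_eq_add j x w
      rw [hrw]
      simpa using ((hasDerivAt_id x).smul_const
        (Pi.single j 1 : Fin (n+1) → ℝ)).const_add (j.insertNth 0 w)
    refine stein1d ht _ _
      (fun x => (hgd _).hasFDerivAt.comp_hasDerivAt x (hcurve x)) ?_
      (A := A) (B := B * ‖(Pi.single j 1 : Fin (n+1) → ℝ)‖) (fun x => hA _) (fun x => ?_)
    · exact (hg'.comp (hcont_ins.comp (continuous_id.prodMk continuous_const))).clm_apply
        continuous_const
    · exact le_trans (ContinuousLinearMap.le_opNorm _ _)
        (mul_le_mul_of_nonneg_right (hB _) (norm_nonneg _))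
  calc ∫ y, (y j) • g y ∂(gaussRn (n+1) t)
      = ∫ z, f₁ z ∂(ν.prod π') := by
        rw [← hMPs.integral_comp e.symm.measurableEmbedding (fun y => (y j) • g y)]
        refine integral_congr_ae (ae_of_all _ fun z => ?_)
        show (e.symm z) j • g (e.symm z) = f₁ z
        rw [hes z, hf₁]
        simp only [Fin.insertNth_apply_same]
    _ = ∫ w, ∫ x, f₁ (x, w) ∂ν ∂π' := integral_prod_symm f₁ hf₁int
    _ = ∫ w, ∫ x, f₂ (x, w) ∂ν ∂π' := by
        refine integral_congr_ae (ae_of_all _ fun w => ?_)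
        exact key w
    _ = ∫ z, f₂ z ∂(ν.prod π') := (integral_prod_symm f₂ hf₂int).symm
    _ = ∫ y, t • fderiv ℝ g y (Pi.single j 1) ∂(gaussRn (n+1) t) := by
        rw [← hMPs.integral_comp e.symm.measurableEmbedding
          (fun y => t • fderiv ℝ g y (Pi.single j 1))]
        refine integral_congr_ae (ae_of_all _ fun z => ?_)
        show t • fderiv ℝ g (e.symm z) (Pi.single j 1) = f₂ z
        rw [hes z, hf₂]

lemma integrable_abs_eval {n : ℕ} {t : ℝ} (ht : 0 < t) (j : Fin (n+1)) :
    Integrable (fun y : Fin (n+1) → ℝ => |y j|) (gaussRn (n+1) t) := by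
  set ν := gaussianReal 0 t.toNNReal with hν
  set π' : Measure (Fin n → ℝ) := Measure.pi (fun _ => ν) with hπ'
  set e := MeasurableEquiv.piFinSuccAbove (fun _ : Fin (n+1) => ℝ) j with he_def
  have hMP : MeasurePreserving e (gaussRn (n+1) t) (ν.prod π') :=
    measurePreserving_piFinSuccAbove (fun _ : Fin (n+1) => ν) j
  have habs : Integrable (fun z : ℝ × (Fin n → ℝ) => |z.1|) (ν.prod π') := by
    have h1 : Integrable (fun x : ℝ => |x|) ((ν.prod π').map Prod.fst) := by
      rw [Measure.map_fst_prod]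
      simpa using integrable_abs_gaussianReal ht
    exact (integrable_map_measure h1.aestronglyMeasurable
      measurable_fst.aemeasurable).1 h1
  have hMPs : MeasurePreserving e.symm (ν.prod π') (gaussRn (n+1) t) := hMP.symm
  refine (hMPs.integrable_comp_emb e.symm.measurableEmbedding).1 ?_
  refine habs.congr (ae_of_all _ fun z => ?_)
  show |z.1| = |(e.symm z : Fin (n+1) → ℝ) j|
  rw [show ((e.symm z : Fin (n+1) → ℝ)) = j.insertNth z.1 z.2 from rfl,
    Fin.insertNth_apply_same]


/-- If `F : ℝ^d → ℂ` is bounded and `C²` with bounded first and second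
derivatives, and `L` bounds the Laplacian `ΔF = Σ_j ∂²F/∂x_j²`, then the Gaussian smoothing
of variance `t` satisfies `| ∫ F(a+y) dγ_t^d(y) − F(a) | ≤ t·L`. -/
theorem gaussian_smoothing_laplacian_bound
    (d : ℕ) (hd : 1 ≤ d) (F : (Fin d → ℝ) → ℂ) (hF : ContDiff ℝ 2 F)
    (C₀ C₁ C₂ : ℝ)
    (hb0 : ∀ x, ‖F x‖ ≤ C₀)
    (hb1 : ∀ x, ‖fderiv ℝ F x‖ ≤ C₁)
    (hb2 : ∀ x, ‖fderiv ℝ (fderiv ℝ F) x‖ ≤ C₂)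
    (L : ℝ)
    (hL : ∀ x, ‖∑ j, fderiv ℝ (fun y => fderiv ℝ F y (Pi.single j 1)) x (Pi.single j 1)‖ ≤ L)
    (a : Fin d → ℝ) (t : ℝ) (ht : 0 < t) :
    ‖(∫ y, F (a + y) ∂(gaussRn d t)) - F a‖ ≤ t * L := by
  obtain ⟨n, rfl⟩ : ∃ n, d = n + 1 := ⟨d - 1, (Nat.succ_pred_eq_of_pos hd).symm⟩
  set μ := gaussRn (n+1) t with hμdef
  haveI : IsProbabilityMeasure μ := by
    rw [hμdef]
    exact MeasureTheory.Measure.pi.instIsProbabilityMeasure _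
  have hL0 : 0 ≤ L := le_trans (norm_nonneg _) (hL 0)
  have hC₁ : 0 ≤ C₁ := le_trans (norm_nonneg _) (hb1 0)
  have hC₂ : 0 ≤ C₂ := le_trans (norm_nonneg (fderiv ℝ (fderiv ℝ F) 0)) (hb2 0)
  have hFd : Differentiable ℝ F := hF.differentiable (by norm_num)
  have hDF : ContDiff ℝ 1 (fderiv ℝ F) := hF.fderiv_right (by norm_num)
  have hDFd : Differentiable ℝ (fderiv ℝ F) := hDF.differentiable one_ne_zero
  have hDFc : Continuous (fderiv ℝ F) := hDF.continuous
  have hsingle : ∀ j : Fin (n+1), ‖(Pi.single j 1 : Fin (n+1) → ℝ)‖ = 1 := fun j => by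
    rw [Pi.norm_single]; exact norm_one
  -- integrability of coordinates and norm
  have habsj : ∀ j : Fin (n+1), Integrable (fun y : Fin (n+1) → ℝ => |y j|) μ :=
    fun j => integrable_abs_eval ht j
  have hnorm : Integrable (fun y : Fin (n+1) → ℝ => ‖y‖) μ := by
    refine (integrable_finset_sum Finset.univ (fun (j : Fin (n+1)) _ => habsj j)).mono'
      continuous_norm.aestronglyMeasurable (ae_of_all _ fun y => ?_)
    rw [Real.norm_eq_abs, abs_norm]
    refine (pi_norm_le_iff_of_nonneg
      (Finset.sum_nonneg fun j _ => abs_nonneg _)).2 fun i => ?_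
    rw [Real.norm_eq_abs]
    exact Finset.single_le_sum (fun (j : Fin (n+1)) _ => abs_nonneg (y j))
      (Finset.mem_univ i)
  -- the evaluation continuous linear maps
  set ev : Fin (n+1) → (((Fin (n+1) → ℝ) →L[ℝ] ℂ) →L[ℝ] ℂ) :=
    fun j => ContinuousLinearMap.apply ℝ ℂ (Pi.single j 1) with hev
  have hGc : ∀ j : Fin (n+1),
      ContDiff ℝ 1 (fun x => fderiv ℝ F x (Pi.single j 1)) :=
    fun j => (ev j).contDiff.comp hDF
  have hGd : ∀ j : Fin (n+1),
      Differentiable ℝ (fun x => fderiv ℝ F x (Pi.single j 1)) :=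
    fun j => (hGc j).differentiable one_ne_zero
  have hGfd : ∀ (j : Fin (n+1)) x,
      HasFDerivAt (fun x => fderiv ℝ F x (Pi.single j 1))
        ((ev j).comp (fderiv ℝ (fderiv ℝ F) x)) x :=
    fun j x => ((ev j).hasFDerivAt).comp x (hDFd x).hasFDerivAt
  have hGfd_norm : ∀ (j : Fin (n+1)) x,
      ‖fderiv ℝ (fun x => fderiv ℝ F x (Pi.single j 1)) x‖ ≤ C₂ := by
    intro j x
    rw [(hGfd j x).fderiv]
    refine ContinuousLinearMap.opNorm_le_bound _ hC₂ fun v => ?_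
    calc ‖((ev j).comp (fderiv ℝ (fderiv ℝ F) x)) v‖
        = ‖(fderiv ℝ (fderiv ℝ F) x v) (Pi.single j 1)‖ := rfl
      _ ≤ ‖fderiv ℝ (fderiv ℝ F) x v‖ * ‖(Pi.single j 1 : Fin (n+1) → ℝ)‖ :=
          ContinuousLinearMap.le_opNorm _ _
      _ = ‖fderiv ℝ (fderiv ℝ F) x v‖ := by rw [hsingle j, mul_one]
      _ ≤ ‖fderiv ℝ (fderiv ℝ F) x‖ * ‖v‖ := ContinuousLinearMap.le_opNorm _ _
      _ ≤ C₂ * ‖v‖ := mul_le_mul_of_nonneg_right (hb2 x) (norm_nonneg v)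
  have hGb : ∀ (j : Fin (n+1)) x, ‖fderiv ℝ F x (Pi.single j 1)‖ ≤ C₁ := by
    intro j x
    calc ‖fderiv ℝ F x (Pi.single j 1)‖
        ≤ ‖fderiv ℝ F x‖ * ‖(Pi.single j 1 : Fin (n+1) → ℝ)‖ :=
          ContinuousLinearMap.le_opNorm _ _
      _ = ‖fderiv ℝ F x‖ := by rw [hsingle j, mul_one]
      _ ≤ C₁ := hb1 x
  -- expansion of the derivative
  have hexpand : ∀ (z y : Fin (n+1) → ℝ),
      fderiv ℝ F z y = ∑ j, (y j) • fderiv ℝ F z (Pi.single j 1) := by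
    intro z y
    have hy : y = ∑ j, (y j) • (Pi.single j 1 : Fin (n+1) → ℝ) := by
      conv_lhs => rw [← Finset.univ_sum_single y]
      refine Finset.sum_congr rfl fun j _ => ?_
      rw [← Pi.single_smul, smul_eq_mul, mul_one]
    calc fderiv ℝ F z y
        = fderiv ℝ F z (∑ j, (y j) • (Pi.single j 1 : Fin (n+1) → ℝ)) := by rw [← hy]
      _ = ∑ j, (y j) • fderiv ℝ F z (Pi.single j 1) := by
          rw [map_sum]
          exact Finset.sum_congr rfl fun j _ => (fderiv ℝ F z).map_smul _ _
  -- the parametrized integral and its derivative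
  set φ : ℝ → ℂ := fun s => ∫ y, F (a + s • y) ∂μ with hφ
  set D : ℝ → ℂ := fun s => ∫ y, fderiv ℝ F (a + s • y) y ∂μ with hD
  have hcurve : ∀ (s : ℝ) (y : Fin (n+1) → ℝ),
      HasDerivAt (fun s : ℝ => a + s • y) y s := by
    intro s y
    simpa using ((hasDerivAt_id s).smul_const y).const_add a
  have haffc : ∀ s : ℝ, Continuous (fun y : Fin (n+1) → ℝ => a + s • y) :=
    fun s => continuous_const.add (continuous_id.const_smul s)
  have hφd : ∀ s₀ : ℝ, HasDerivAt φ (D s₀) s₀ := by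
    intro s₀
    refine (hasDerivAt_integral_of_dominated_loc_of_deriv_le (Metric.ball_mem_nhds s₀ one_pos)
      (F := fun s y => F (a + s • y)) (F' := fun s y => fderiv ℝ F (a + s • y) y)
      (bound := fun y => C₁ * ‖y‖) ?_ ?_ ?_ ?_ ?_ ?_).2
    · exact Eventually.of_forall fun s =>
        (hF.continuous.comp (haffc s)).aestronglyMeasurable
    · exact (integrable_const C₀).mono'
        (hF.continuous.comp (haffc s₀)).aestronglyMeasurable
        (ae_of_all _ fun y => hb0 _)
    · exact ((hDFc.comp (haffc s₀)).clm_apply continuous_id).aestronglyMeasurable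
    · refine ae_of_all _ fun y s _ => ?_
      exact le_trans (ContinuousLinearMap.le_opNorm _ _)
        (mul_le_mul_of_nonneg_right (hb1 _) (norm_nonneg _))
    · exact hnorm.const_mul C₁
    · exact ae_of_all _ fun y s _ =>
        (hFd _).hasFDerivAt.comp_hasDerivAt s (hcurve s y)
  -- the bound on D on [0,1]
  have hDbound : ∀ s ∈ Icc (0:ℝ) 1, ‖D s‖ ≤ t * L := by
    intro s hs
    have haff : ContDiff ℝ 1 (fun y : Fin (n+1) → ℝ => a + s • y) :=
      contDiff_const.add (contDiff_id.const_smul s)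
    have haffd : ∀ y : Fin (n+1) → ℝ,
        HasFDerivAt (fun y : Fin (n+1) → ℝ => a + s • y)
          (s • ContinuousLinearMap.id ℝ (Fin (n+1) → ℝ)) y := by
      intro y
      exact ((s • ContinuousLinearMap.id ℝ (Fin (n+1) → ℝ)).hasFDerivAt (x := y)).const_add a
    set gj : Fin (n+1) → ((Fin (n+1) → ℝ) → ℂ) :=
      fun j y => fderiv ℝ F (a + s • y) (Pi.single j 1) with hgj
    have hgjc : ∀ j, ContDiff ℝ 1 (gj j) := fun j => (hGc j).comp haff
    have hgjfd : ∀ j y, HasFDerivAt (gj j)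
        (((ev j).comp (fderiv ℝ (fderiv ℝ F) (a + s • y))).comp
          (s • ContinuousLinearMap.id ℝ (Fin (n+1) → ℝ))) y :=
      fun j y => by rw [hgj]; exact (hGfd j (a + s • y)).comp y (haffd y)
    have hgjfd_app : ∀ j y, fderiv ℝ (gj j) y (Pi.single j 1)
        = s • (fderiv ℝ (fun x => fderiv ℝ F x (Pi.single j 1)) (a + s • y)
            (Pi.single j 1)) := by
      intro j y
      rw [(hgjfd j y).fderiv, (hGfd j (a + s • y)).fderiv]
      show ((ev j).comp (fderiv ℝ (fderiv ℝ F) (a + s • y)))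
        ((s • ContinuousLinearMap.id ℝ (Fin (n+1) → ℝ)) (Pi.single j 1)) = _
      rw [ContinuousLinearMap.smul_apply, ContinuousLinearMap.id_apply, _root_.map_smul]
    have hgjfd_norm : ∀ j y, ‖fderiv ℝ (gj j) y‖ ≤ C₂ * |s| := by
      intro j y
      rw [(hgjfd j y).fderiv]
      calc ‖((ev j).comp (fderiv ℝ (fderiv ℝ F) (a + s • y))).comp
            (s • ContinuousLinearMap.id ℝ (Fin (n+1) → ℝ))‖
          ≤ ‖(ev j).comp (fderiv ℝ (fderiv ℝ F) (a + s • y))‖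
            * ‖s • ContinuousLinearMap.id ℝ (Fin (n+1) → ℝ)‖ :=
            ContinuousLinearMap.opNorm_comp_le _ _
        _ ≤ C₂ * |s| := by
            refine mul_le_mul ?_ ?_ (norm_nonneg _) hC₂
            · rw [← (hGfd j (a + s • y)).fderiv]
              exact hGfd_norm j (a + s • y)
            · refine le_trans (ContinuousLinearMap.opNorm_smul_le s (ContinuousLinearMap.id ℝ (Fin (n+1) → ℝ))) ?_
              rw [Real.norm_eq_abs]
              calc |s| * ‖ContinuousLinearMap.id ℝ (Fin (n+1) → ℝ)‖
                  ≤ |s| * 1 :=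
                    mul_le_mul_of_nonneg_left ContinuousLinearMap.norm_id_le (abs_nonneg s)
                _ = |s| := mul_one _
    have hstein : ∀ j : Fin (n+1), (∫ y, (y j) • gj j y ∂μ)
        = ∫ y, t • (fderiv ℝ (gj j) y (Pi.single j 1)) ∂μ :=
      fun j => steinPi ht j (gj j) (hgjc j) (A := C₁) (B := C₂ * |s|)
        (fun y => hGb j _) (fun y => hgjfd_norm j y)
    have hint1 : ∀ j : Fin (n+1), Integrable (fun y => (y j) • gj j y) μ := by
      intro j
      refine ((habsj j).const_mul C₁).mono'
        ((continuous_apply j).smul ((hGc j).continuous.comp (haffc s))).aestronglyMeasurable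
        (ae_of_all _ fun y => ?_)
      rw [norm_smul, Real.norm_eq_abs]
      calc |y j| * ‖gj j y‖ ≤ |y j| * C₁ := mul_le_mul_of_nonneg_left (hGb j _) (abs_nonneg _)
        _ = C₁ * |y j| := mul_comm _ _
    have hint2 : ∀ j : Fin (n+1), Integrable
        (fun y => t • (fderiv ℝ (gj j) y (Pi.single j 1))) μ := by
      intro j
      have hcont : Continuous (fun y => t • (fderiv ℝ (gj j) y (Pi.single j 1))) := by
        have h1 : Continuous (fderiv ℝ (gj j)) := (hgjc j).continuous_fderiv one_ne_zero
        exact (h1.clm_apply continuous_const).const_smul t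
      refine (integrable_const (t * (C₂ * |s|))).mono' hcont.aestronglyMeasurable
        (ae_of_all _ fun y => ?_)
      rw [norm_smul, Real.norm_eq_abs, abs_of_pos ht]
      refine mul_le_mul_of_nonneg_left ?_ ht.le
      calc ‖fderiv ℝ (gj j) y (Pi.single j 1)‖
          ≤ ‖fderiv ℝ (gj j) y‖ * ‖(Pi.single j 1 : Fin (n+1) → ℝ)‖ :=
            ContinuousLinearMap.le_opNorm _ _
        _ = ‖fderiv ℝ (gj j) y‖ := by rw [hsingle j, mul_one]
        _ ≤ C₂ * |s| := hgjfd_norm j y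
    have hcalc : D s = ∫ y, (t * s) •
        (∑ j, fderiv ℝ (fun x => fderiv ℝ F x (Pi.single j 1)) (a + s • y)
          (Pi.single j 1)) ∂μ := by
      calc D s = ∫ y, ∑ j, (y j) • gj j y ∂μ := by
            refine integral_congr_ae (ae_of_all _ fun y => ?_)
            exact hexpand (a + s • y) y
        _ = ∑ j, ∫ y, (y j) • gj j y ∂μ :=
            integral_finset_sum Finset.univ (fun j _ => hint1 j)
        _ = ∑ j, ∫ y, t • (fderiv ℝ (gj j) y (Pi.single j 1)) ∂μ :=
            Finset.sum_congr rfl fun j _ => hstein j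
        _ = ∫ y, ∑ j, t • (fderiv ℝ (gj j) y (Pi.single j 1)) ∂μ :=
            (integral_finset_sum Finset.univ (fun j _ => hint2 j)).symm
        _ = ∫ y, (t * s) • (∑ j, fderiv ℝ (fun x => fderiv ℝ F x (Pi.single j 1))
              (a + s • y) (Pi.single j 1)) ∂μ := by
            refine integral_congr_ae (ae_of_all _ fun y => ?_)
            show ∑ j, t • (fderiv ℝ (gj j) y (Pi.single j 1)) = _
            calc ∑ j, t • (fderiv ℝ (gj j) y (Pi.single j 1))
                = ∑ j, (t * s) • (fderiv ℝ (fun x => fderiv ℝ F x (Pi.single j 1))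
                    (a + s • y) (Pi.single j 1)) :=
                  Finset.sum_congr rfl fun j _ => by rw [hgjfd_app j y, smul_smul]
              _ = (t * s) • ∑ j, (fderiv ℝ (fun x => fderiv ℝ F x (Pi.single j 1))
                    (a + s • y) (Pi.single j 1)) := (Finset.smul_sum).symm
    rw [hcalc]
    refine le_trans (norm_integral_le_of_norm_le (integrable_const (t * L))
      (ae_of_all _ fun y => ?_)) (by simp)
    rw [norm_smul, Real.norm_eq_abs, abs_of_nonneg (mul_nonneg ht.le hs.1)]
    calc t * s * ‖∑ j, fderiv ℝ (fun x => fderiv ℝ F x (Pi.single j 1))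
          (a + s • y) (Pi.single j 1)‖
        ≤ t * s * L := mul_le_mul_of_nonneg_left (hL (a + s • y))
          (mul_nonneg ht.le hs.1)
      _ ≤ t * 1 * L := by
          refine mul_le_mul_of_nonneg_right ?_ hL0
          exact mul_le_mul_of_nonneg_left hs.2 ht.le
      _ = t * L := by ring
  -- mean value inequality
  have hmv := norm_image_sub_le_of_norm_deriv_le_segment'
    (f := φ) (f' := D) (a := 0) (b := 1) (C := t * L)
    (fun s _ => (hφd s).hasDerivWithinAt)
    (fun s hsI => hDbound s ⟨hsI.1, hsI.2.le⟩) 1 ⟨zero_le_one, le_rfl⟩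
  have hφ1 : φ 1 = ∫ y, F (a + y) ∂μ := by
    rw [hφ]
    simp only [one_smul]
  have hφ0 : φ 0 = F a := by
    rw [hφ]
    simp only [zero_smul, add_zero]
    simp [measure_univ]
  calc ‖(∫ y, F (a + y) ∂μ) - F a‖ = ‖φ 1 - φ 0‖ := by rw [hφ1, hφ0]
    _ ≤ t * L * (1 - 0) := hmv
    _ = t * L := by ring
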